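/- Let x < y be positive integers, p ≥ 2, α, β > 0 with γ = β, and suppose ⌈log₂(p−1)⌉·α + β·(p−1)·x ≤ β·y. Consider a gather problem with one block of size y (at processor r) and p−1 blocks of size x, total m = (p−1)x + y. Then there exists a gather tree of completion cost exactly α + β·m, every gather tree has cost at least α + β·m, and α + β·m < ⌈log₂ p⌉·α + β·m (provided ⌈log₂ p⌉ ≥ 2, i.e., p ≥ 3). -/

import Mathlib

open Finset

/-- A gather tree over processors `Fin n`, written in binary-join form: `node t s` means the
root of `t` (which is also the root of the combined tree) receives, as its last communication,
the whole data segment gathered in the subtree `s` from the root of `s`. -/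
inductive GTree (n : ℕ) : Type where
  | leaf : Fin n → GTree n
  | node : GTree n → GTree n → GTree n

namespace GTree

/-- The root processor of a gather tree. -/
def root {n : ℕ} : GTree n → Fin n
  | leaf i => i
  | node t _ => t.root

/-- The set of processors spanned by a gather tree. -/
def members {n : ℕ} : GTree n → Finset (Fin n)
  | leaf i => {i}
  | node t s => t.members ∪ s.members

/-- A gather tree is valid if each processor occurs at most once in it. -/
def valid {n : ℕ} : GTree n → Prop
  | leaf _ => True
  | node t s => t.valid ∧ s.valid ∧ Disjoint t.members s.members

/-- Total size of the data blocks gathered in a tree. -/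
def size {n : ℕ} (m : Fin n → ℝ) : GTree n → ℝ
  | leaf i => m i
  | node t s => t.size m + s.size m

/-- Completion time (cost) of a gather tree under the one-ported linear cost model:
a singleton subtree accounts for the local copy `γ * m i` of its processor's own block,
and a join costs the maximum of the two subtree completion times plus the transmission
time `α + β * Size(sent subtree)`. -/
def cost {n : ℕ} (α β γ : ℝ) (m : Fin n → ℝ) : GTree n → ℝ
  | leaf i => γ * m i
  | node t s => max (t.cost α β γ m) (s.cost α β γ m) + α + β * s.size m

/-- Number of children of the root of the tree. -/
def rootDeg {n : ℕ} : GTree n → ℕ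
  | leaf _ => 0
  | node t _ => t.rootDeg + 1

end GTree

section Aux

open GTree

lemma gtree_size_eq_sum {n : ℕ} (m : Fin n → ℝ) :
    ∀ T : GTree n, T.valid → T.size m = ∑ i ∈ T.members, m i
  | GTree.leaf i, _ => by simp [GTree.size, GTree.members]
  | GTree.node t s, h => by
      obtain ⟨ht, hs, hd⟩ := h
      simp only [GTree.size, GTree.members]
      rw [Finset.sum_union hd, gtree_size_eq_sum m t ht, gtree_size_eq_sum m s hs]

lemma gtree_size_nonneg {n : ℕ} (m : Fin n → ℝ) (hm : ∀ i, 0 ≤ m i) :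
    ∀ T : GTree n, 0 ≤ T.size m
  | GTree.leaf i => hm i
  | GTree.node t s => add_nonneg (gtree_size_nonneg m hm t) (gtree_size_nonneg m hm s)

lemma gtree_cost_ge {n : ℕ} (α β : ℝ) (hα : 0 ≤ α) (m : Fin n → ℝ) (hm : ∀ i, 0 ≤ m i) :
    ∀ T : GTree n, β * T.size m ≤ T.cost α β β m
  | GTree.leaf i => le_refl _
  | GTree.node t s => by
      have h1 := gtree_cost_ge α β hα m hm t
      simp only [GTree.cost, GTree.size]
      have h2 : β * t.size m ≤ max (t.cost α β β m) (s.cost α β β m) :=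
        le_trans h1 (le_max_left _ _)
      linarith

lemma gtree_build {n : ℕ} (α β x : ℝ) (hα : 0 ≤ α) (hβ : 0 ≤ β) (hxnn : 0 ≤ x)
    (m : Fin n → ℝ) :
    ∀ k (F : Finset (Fin n)), F.card = k → 0 < k → (∀ i ∈ F, m i = x) →
    ∃ S : GTree n, S.valid ∧ S.members = F ∧ S.size m = k * x ∧
      S.cost α β β m ≤ (Nat.clog 2 k : ℝ) * α + β * (k * x) := by
  intro k
  induction k using Nat.strong_induction_on with
  | _ k ih =>
    intro F hF hk hmx
    rcases eq_or_lt_of_le (show 1 ≤ k by omega) with h1 | h2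
    · -- k = 1
      obtain ⟨i, hi⟩ := Finset.card_eq_one.mp (hF.trans h1.symm)
      refine ⟨GTree.leaf i, trivial, by simp [GTree.members, hi], ?_, ?_⟩
      · simp [GTree.size, hmx i (by simp [hi]), ← h1]
      · simp [GTree.cost, hmx i (by simp [hi]), ← h1, Nat.clog]
    · -- k ≥ 2
      set k1 := (k + 1) / 2 with hk1
      have hk1lt : k1 < k := by omega
      have hk1pos : 0 < k1 := by omega
      have hk2pos : 0 < k - k1 := by omega
      obtain ⟨F1, hF1sub, hF1card⟩ := Finset.exists_subset_card_eq (show k1 ≤ F.card by omega)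
      have hF2card : (F \ F1).card = k - k1 := by
        rw [Finset.card_sdiff_of_subset hF1sub, hF1card, hF]
      obtain ⟨S1, hv1, hmem1, hsz1, hc1⟩ := ih k1 hk1lt F1 hF1card hk1pos
        (fun i hi => hmx i (hF1sub hi))
      obtain ⟨S2, hv2, hmem2, hsz2, hc2⟩ := ih (k - k1) (by omega) (F \ F1) hF2card hk2pos
        (fun i hi => hmx i (Finset.sdiff_subset hi))
      refine ⟨GTree.node S1 S2, ⟨hv1, hv2, ?_⟩, ?_, ?_, ?_⟩
      · rw [hmem1, hmem2]; exact Finset.disjoint_sdiff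
      · simp only [GTree.members, hmem1, hmem2, Finset.union_sdiff_of_subset hF1sub]
      · simp only [GTree.size, hsz1, hsz2]
        push_cast
        have : (k1 : ℝ) + (k - k1 : ℕ) = k := by push_cast [Nat.cast_sub hk1lt.le]; ring
        nlinarith [this]
      · have hclog : Nat.clog 2 k = Nat.clog 2 k1 + 1 := by
          rw [Nat.clog_of_two_le (by norm_num) h2]
          have : (k + 2 - 1) / 2 = k1 := by omega
          rw [this]
        have hmono : Nat.clog 2 (k - k1) ≤ Nat.clog 2 k1 := Nat.clog_mono_right 2 (by omega)
        have hc2' : S2.cost α β β m ≤ (Nat.clog 2 k1 : ℝ) * α + β * (k1 * x) := by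
          refine hc2.trans ?_
          have h3 : ((Nat.clog 2 (k - k1) : ℕ) : ℝ) ≤ (Nat.clog 2 k1 : ℝ) := by
            exact_mod_cast hmono
          have h4 : ((k - k1 : ℕ) : ℝ) ≤ (k1 : ℝ) := by
            exact_mod_cast (by omega : k - k1 ≤ k1)
          have h5 := mul_le_mul_of_nonneg_right h3 hα
          have h6 := mul_le_mul_of_nonneg_left (mul_le_mul_of_nonneg_right h4 hxnn) hβ
          linarith
        simp only [GTree.cost, hsz2]
        have hmax : max (S1.cost α β β m) (S2.cost α β β m) ≤
            (Nat.clog 2 k1 : ℝ) * α + β * (k1 * x) := max_le hc1 hc2'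
        rw [hclog]
        push_cast
        have hcast : ((k - k1 : ℕ) : ℝ) = (k : ℝ) - (k1 : ℝ) := by
          push_cast [Nat.cast_sub hk1lt.le]; ring
        have hsplit : β * (((k - k1 : ℕ) : ℝ) * x) = β * ((k : ℝ) * x) - β * ((k1 : ℝ) * x) := by
          rw [hcast]; ring
        linarith

end Aux

/-- Lemma (large-small blocks): with one block of size `y` at processor `r` and `p - 1`
blocks of size `x < y`, `γ = β`, and `⌈log₂ (p-1)⌉ * α + β * (p-1) * x ≤ β * y`:
there is a gather tree of completion cost exactly `α + β * m` where `m = (p-1) * x + y`,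
every gather tree has cost at least `α + β * m`, and (for `p ≥ 3`, so `⌈log₂ p⌉ ≥ 2`)
`α + β * m < ⌈log₂ p⌉ * α + β * m`. -/
theorem stmt_6 (p : ℕ) (hp : 2 ≤ p) (x y : ℕ) (hx : 0 < x) (hxy : x < y)
    (α β γ : ℝ) (hα : 0 < α) (hβ : 0 < β) (hγ : γ = β)
    (hcond : (Nat.clog 2 (p - 1) : ℝ) * α + β * (((p - 1) * x : ℕ) : ℝ) ≤ β * (y : ℝ))
    (r : Fin p) (m : Fin p → ℝ) (hm : ∀ i, m i = if i = r then (y : ℝ) else (x : ℝ)) :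
    (∃ T : GTree p, T.valid ∧ T.members = Finset.univ ∧ T.root = r ∧
        T.cost α β γ m = α + β * (((p - 1) * x + y : ℕ) : ℝ)) ∧
    (∀ T : GTree p, T.valid → T.members = Finset.univ →
        α + β * (((p - 1) * x + y : ℕ) : ℝ) ≤ T.cost α β γ m) ∧
    (3 ≤ p → α + β * (((p - 1) * x + y : ℕ) : ℝ) <
        (Nat.clog 2 p : ℝ) * α + β * (((p - 1) * x + y : ℕ) : ℝ)) := by
  rw [hγ]
  have hm0 : ∀ i, 0 ≤ m i := by
    intro i; rw [hm i]; split <;> positivity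
  have hcard : (Finset.univ \ {r} : Finset (Fin p)).card = p - 1 := by
    rw [Finset.card_sdiff_of_subset (Finset.subset_univ _)]
    simp
  have hsum : ∑ i, m i = (((p - 1) * x + y : ℕ) : ℝ) := by
    rw [← Finset.sum_sdiff (Finset.subset_univ ({r} : Finset (Fin p)))]
    have h1 : ∑ i ∈ Finset.univ \ {r}, m i = ((p - 1 : ℕ) : ℝ) * (x : ℝ) := by
      rw [Finset.sum_congr rfl (fun i hi => by
        rw [hm i, if_neg]
        simp only [Finset.mem_sdiff, Finset.mem_singleton] at hi
        exact hi.2)]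
      rw [Finset.sum_const, hcard, nsmul_eq_mul]
    rw [h1, Finset.sum_singleton, hm r, if_pos rfl]
    push_cast
    ring
  refine ⟨?_, ?_, ?_⟩
  · -- existence
    obtain ⟨S, hvS, hmemS, hszS, hcS⟩ := gtree_build α β (x : ℝ) hα.le hβ.le (by positivity) m
      (p - 1) (Finset.univ \ {r}) hcard (by omega) (fun i hi => by
        rw [hm i, if_neg]
        simp only [Finset.mem_sdiff, Finset.mem_singleton] at hi
        exact hi.2)
    refine ⟨GTree.node (GTree.leaf r) S, ⟨trivial, hvS, ?_⟩, ?_, rfl, ?_⟩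
    · rw [hmemS]
      simp [GTree.members, Finset.disjoint_sdiff]
    · simp only [GTree.members, hmemS]
      exact Finset.union_sdiff_of_subset (Finset.subset_univ _)
    · have hcS' : S.cost α β β m ≤ β * (y : ℝ) := by
        refine hcS.trans ?_
        refine le_trans (le_of_eq ?_) hcond
        push_cast
        ring
      have hmr : m r = (y : ℝ) := by rw [hm r]; simp
      simp only [GTree.cost, GTree.size, hszS, hmr]
      rw [max_eq_left hcS']
      push_cast
      ring
  · -- lower bound
    intro T hv hmemT
    cases T with
    | leaf i =>
        exfalso
        have : ({i} : Finset (Fin p)).card = (Finset.univ : Finset (Fin p)).card := by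
          rw [← hmemT]; rfl
        simp at this
        omega
    | node t s =>
        obtain ⟨hvt, hvs, hd⟩ := hv
        have hst : β * t.size m ≤ t.cost α β β m := gtree_cost_ge α β hα.le m hm0 t
        have hss : β * s.size m ≤ s.cost α β β m := gtree_cost_ge α β hα.le m hm0 s
        have hsz : t.size m + s.size m = (((p - 1) * x + y : ℕ) : ℝ) := by
          have h := gtree_size_eq_sum m (GTree.node t s) ⟨hvt, hvs, hd⟩
          simp only [GTree.size, hmemT] at h
          exact h.trans hsum
        simp only [GTree.cost]
        have hmax : t.cost α β β m ≤ max (t.cost α β β m) (s.cost α β β m) := le_max_left _ _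
        nlinarith [hsz]
  · -- strict inequality
    intro hp3
    have h2clog : 2 ≤ Nat.clog 2 p := by
      by_contra h
      have h1 : Nat.clog 2 p ≤ 1 := by omega
      have := (Nat.clog_le_iff_le_pow (by norm_num : 1 < 2)).mp h1
      simp at this
      omega
    have : (2 : ℝ) ≤ (Nat.clog 2 p : ℝ) := by exact_mod_cast h2clog
    nlinarith
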